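/- arXiv:2403.03443 — 3 statements merged into one kernel-verified Lean document; each statement's English description precedes it below -/
import Mathlib

section
/- The generating function identity Σ_{m≥0} (Σ_{α ⊢ m, β component-wise ≤ α} ((-1)^{l(α)}/z_α) · ∏_i C(a_i, b_i)) w^m · w^{|β|} = (1-w) · ((-1)^{l(β)}/z_β) · w^{|β|} holds for every partition β = 1^{b_1} 2^{b_2}⋯; equivalently, Σ_{α ⊢ m} ((-1)^{l(α)}/z_α) ∏_i C(a_i, b_i) equals the coefficient of w^{m - |β|} in ((-1)^{l(β)}/z_β)(1-w). -/
open Multiset Finset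

/-- `z_α = ∏_i i^{a_i} a_i!` for a partition `α` of `n`, as a rational. -/
noncomputable def zPart {n : ℕ} (α : n.Partition) : ℚ :=
  ∏ i ∈ Finset.range (n + 1),
    (i : ℚ) ^ (Multiset.count i α.parts) * ((Multiset.count i α.parts).factorial : ℚ)

namespace AltSum

lemma count_parts_eq_zero {n : ℕ} (α : n.Partition) {i : ℕ} (h : n < i) :
    Multiset.count i α.parts = 0 := by
  rw [Multiset.count_eq_zero]
  intro hi
  exact absurd ((Multiset.le_sum_of_mem hi).trans_eq α.parts_sum) (by omega)

lemma zPart_eq {n : ℕ} (α : n.Partition) (N : ℕ) (h : n ≤ N) :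
    zPart α = ∏ i ∈ Finset.range (N + 1),
      (i : ℚ) ^ (Multiset.count i α.parts) * ((Multiset.count i α.parts).factorial : ℚ) := by
  unfold zPart
  refine Finset.prod_subset (Finset.range_subset_range.2 (by omega)) ?_
  intro i hi hni
  rw [Finset.mem_range] at hi hni
  rw [count_parts_eq_zero α (by omega)]
  simp

lemma zPart_pos {n : ℕ} (α : n.Partition) : 0 < zPart α := by
  unfold zPart
  refine Finset.prod_pos ?_
  intro i _
  rcases Nat.eq_zero_or_pos (Multiset.count i α.parts) with h | h
  · simp [h]
  · have hi : 0 < i := α.parts_pos (Multiset.count_pos.1 h)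
    positivity

lemma key_div (i b c : ℕ) :
    (((b + c).choose b : ℕ) : ℚ) / ((i : ℚ) ^ (b + c) * ((b + c).factorial : ℚ)) =
      (1 / ((i : ℚ) ^ b * (b.factorial : ℚ))) * (1 / ((i : ℚ) ^ c * (c.factorial : ℚ))) := by
  rcases Nat.eq_zero_or_pos i with rfl | hi
  · rcases Nat.eq_zero_or_pos b with rfl | hb
    · rcases Nat.eq_zero_or_pos c with rfl | hc
      · norm_num
      · push_cast
        rw [zero_pow (by omega : 0 + c ≠ 0), zero_pow (by omega : c ≠ 0)]
        simp
    · push_cast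
      rw [zero_pow (by omega : b + c ≠ 0), zero_pow (by omega : b ≠ 0)]
      simp
  · have h := Nat.choose_mul_factorial_mul_factorial (Nat.le_add_right b c)
    rw [Nat.add_sub_cancel_left] at h
    have h' : (((b + c).choose b : ℕ) : ℚ) * b.factorial * c.factorial = (b + c).factorial := by
      exact_mod_cast congrArg (Nat.cast : ℕ → ℚ) h
    have hiq : (0 : ℚ) < (i : ℚ) := by exact_mod_cast hi
    have hbf : ((b.factorial : ℕ) : ℚ) ≠ 0 := by positivity
    have hcf : ((c.factorial : ℕ) : ℚ) ≠ 0 := by positivity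
    have hbcf : (((b + c).factorial : ℕ) : ℚ) ≠ 0 := by positivity
    rw [pow_add]
    field_simp
    linear_combination h'
noncomputable def S (n : ℕ) : ℚ :=
  ∑ γ : n.Partition, (-1 : ℚ) ^ (Multiset.card γ.parts) / zPart γ

def addPart (j : ℕ) (hj : 0 < j) {d : ℕ} (γ : d.Partition) : (d + j).Partition where
  parts := j ::ₘ γ.parts
  parts_pos := by
    intro i hi
    rcases Multiset.mem_cons.1 hi with rfl | h
    · exact hj
    · exact γ.parts_pos h
  parts_sum := by rw [Multiset.sum_cons, γ.parts_sum]; omega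

lemma addPart_parts (j : ℕ) (hj : 0 < j) {d : ℕ} (γ : d.Partition) :
    (addPart j hj γ).parts = j ::ₘ γ.parts := rfl

lemma zPart_addPart (j : ℕ) (hj : 0 < j) {d : ℕ} (γ : d.Partition) :
    zPart (addPart j hj γ) =
      zPart γ * ((j : ℚ) * ((Multiset.count j γ.parts : ℚ) + 1)) := by
  rw [zPart_eq (addPart j hj γ) (d + j) le_rfl, zPart_eq γ (d + j) (by omega)]
  have hjmem : j ∈ Finset.range (d + j + 1) := by
    rw [Finset.mem_range]; omega
  rw [← Finset.mul_prod_erase _ _ hjmem, ← Finset.mul_prod_erase _ _ hjmem]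
  have hprod : (∏ x ∈ (Finset.range (d + j + 1)).erase j,
      (x : ℚ) ^ (Multiset.count x (addPart j hj γ).parts) *
        ((Multiset.count x (addPart j hj γ).parts).factorial : ℚ)) =
      ∏ x ∈ (Finset.range (d + j + 1)).erase j,
      (x : ℚ) ^ (Multiset.count x γ.parts) * ((Multiset.count x γ.parts).factorial : ℚ) := by
    refine Finset.prod_congr rfl ?_
    intro i hi
    rw [addPart_parts, Multiset.count_cons_of_ne (Finset.ne_of_mem_erase hi)]
  rw [hprod]
  have hfac : ((j : ℚ) ^ (Multiset.count j (addPart j hj γ).parts) *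
      ((Multiset.count j (addPart j hj γ).parts).factorial : ℚ)) =
      ((j : ℚ) ^ (Multiset.count j γ.parts) * ((Multiset.count j γ.parts).factorial : ℚ)) *
        ((j : ℚ) * ((Multiset.count j γ.parts : ℚ) + 1)) := by
    rw [addPart_parts, Multiset.count_cons_self, pow_succ, Nat.factorial_succ]
    push_cast
    ring
  rw [hfac]
  ring

lemma step (j d n : ℕ) (hj : 0 < j) (h : d + j = n) :
    S d = ∑ γ : n.Partition,
      -((-1 : ℚ) ^ (Multiset.card γ.parts) * (j : ℚ) * (Multiset.count j γ.parts : ℚ)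
        / zPart γ) := by
  subst h
  rw [S]
  rw [← Finset.sum_filter_of_ne (p := fun γ : (d + j).Partition => j ∈ γ.parts)
    (by
      intro γ _ hne
      by_contra hmem
      apply hne
      rw [Multiset.count_eq_zero.2 hmem]
      simp)]
  refine Finset.sum_bij (fun γ' _ => addPart j hj γ') ?_ ?_ ?_ ?_
  · intro γ' _
    rw [Finset.mem_filter]
    exact ⟨Finset.mem_univ _, by rw [addPart_parts]; exact Multiset.mem_cons_self _ _⟩
  · intro γ₁ _ γ₂ _ hee
    have := congrArg Nat.Partition.parts hee
    rw [addPart_parts, addPart_parts] at this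
    exact Nat.Partition.ext ((Multiset.cons_inj_right j).1 this)
  · intro γ hγ
    rw [Finset.mem_filter] at hγ
    obtain ⟨-, hmem⟩ := hγ
    refine ⟨⟨γ.parts.erase j, ?_, ?_⟩, Finset.mem_univ _, ?_⟩
    · intro i hi
      exact γ.parts_pos (Multiset.mem_of_mem_erase hi)
    · have h1 : j + (γ.parts.erase j).sum = γ.parts.sum := by
        rw [← Multiset.sum_cons, Multiset.cons_erase hmem]
      have h2 := γ.parts_sum
      omega
    · refine Nat.Partition.ext ?_
      rw [addPart_parts]
      exact Multiset.cons_erase hmem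
  · intro γ' _
    rw [addPart_parts, zPart_addPart j hj γ']
    rw [Multiset.count_cons_self, Multiset.card_cons]
    have hz : zPart γ' ≠ 0 := (zPart_pos γ').ne'
    have hjq : (j : ℚ) ≠ 0 := Nat.cast_ne_zero.2 (by omega)
    have hcq : ((Multiset.count j γ'.parts : ℚ) + 1) ≠ 0 := by positivity
    rw [pow_succ]
    push_cast
    field_simp

lemma sum_count_mul (s : Finset ℕ) (M : Multiset ℕ) (h : ∀ x ∈ M, x ∈ s) :
    ∑ j ∈ s, j * M.count j = M.sum := by
  induction M using Multiset.induction with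
  | empty => simp
  | cons a M ih =>
    have ha : a ∈ s := h a (Multiset.mem_cons_self a M)
    have hM : ∀ x ∈ M, x ∈ s := fun x hx => h x (Multiset.mem_cons_of_mem hx)
    simp only [Multiset.count_cons, Multiset.sum_cons, mul_add]
    rw [Finset.sum_add_distrib, ih hM]
    have : ∑ j ∈ s, j * (if j = a then 1 else 0) = a := by
      rw [Finset.sum_congr rfl (fun j _ => by rw [mul_ite, mul_one, mul_zero]),
        Finset.sum_ite_eq' s a (fun j => j), if_pos ha]
    omega

lemma recursion (n : ℕ) (_hn : 0 < n) :
    ∑ j ∈ Finset.Icc 1 n, S (n - j) = -((n : ℚ) * S n) := by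
  have hstep : ∀ j ∈ Finset.Icc 1 n, S (n - j) = ∑ γ : n.Partition,
      -((-1 : ℚ) ^ (Multiset.card γ.parts) * (j : ℚ) * (Multiset.count j γ.parts : ℚ)
        / zPart γ) := by
    intro j hj
    rw [Finset.mem_Icc] at hj
    exact step j (n - j) n (by omega) (by omega)
  rw [Finset.sum_congr rfl hstep, Finset.sum_comm]
  have inner : ∀ γ : n.Partition, (∑ j ∈ Finset.Icc 1 n,
      -((-1 : ℚ) ^ (Multiset.card γ.parts) * (j : ℚ) * (Multiset.count j γ.parts : ℚ)
        / zPart γ)) = -((n : ℚ) * ((-1 : ℚ) ^ (Multiset.card γ.parts) / zPart γ)) := by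
    intro γ
    have h1 : ∀ j ∈ Finset.Icc 1 n,
        -((-1 : ℚ) ^ (Multiset.card γ.parts) * (j : ℚ) * (Multiset.count j γ.parts : ℚ)
          / zPart γ) =
        -((-1 : ℚ) ^ (Multiset.card γ.parts) / zPart γ) *
          ((j * Multiset.count j γ.parts : ℕ) : ℚ) := by
      intro j _
      push_cast
      ring
    rw [Finset.sum_congr rfl h1, ← Finset.mul_sum, ← Nat.cast_sum]
    have hcnt : ∑ j ∈ Finset.Icc 1 n, j * Multiset.count j γ.parts = n := by
      rw [sum_count_mul _ _ ?_, γ.parts_sum]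
      intro x hx
      rw [Finset.mem_Icc]
      exact ⟨γ.parts_pos hx, (Multiset.le_sum_of_mem hx).trans_eq γ.parts_sum⟩
    rw [hcnt]
    ring
  rw [Finset.sum_congr rfl (fun γ _ => inner γ), S, Finset.mul_sum, ← neg_neg (∑ γ : n.Partition, _), neg_inj]
  rw [← Finset.sum_neg_distrib]
  exact Finset.sum_congr rfl (fun γ _ => by ring)

lemma S_zero : S 0 = 1 := by
  rw [S, Fintype.sum_unique]
  simp [zPart]

lemma sumA (n : ℕ) : S n = if n = 0 then 1 else if n = 1 then -1 else 0 := by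
  induction n using Nat.strong_induction_on with
  | _ n ih =>
    match n with
    | 0 => simpa using S_zero
    | (n + 1) =>
      have hrec := recursion (n + 1) (by omega)
      have hsum : ∑ j ∈ Finset.Icc 1 (n + 1), S (n + 1 - j) =
          ∑ j ∈ Finset.Icc 1 (n + 1),
            ((if j = n + 1 then (1 : ℚ) else 0) + (if j = n then (-1 : ℚ) else 0)) := by
        refine Finset.sum_congr rfl ?_
        intro j hj
        rw [Finset.mem_Icc] at hj
        rw [ih (n + 1 - j) (by omega)]
        rcases eq_or_ne j (n + 1) with rfl | h1
        · rw [if_pos (by omega), if_pos rfl, if_neg (by omega)]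
          norm_num
        · rcases eq_or_ne j n with rfl | h2
          · rw [if_neg (by omega), if_pos (by omega), if_neg h1, if_pos rfl]
            norm_num
          · rw [if_neg (by omega), if_neg (by omega), if_neg h1, if_neg h2]
            norm_num
      rw [hsum, Finset.sum_add_distrib, Finset.sum_ite_eq' _ (n + 1) (fun _ => (1 : ℚ)),
        Finset.sum_ite_eq' _ n (fun _ => (-1 : ℚ)), if_pos (by rw [Finset.mem_Icc]; omega)] at hrec
      rcases Nat.eq_zero_or_pos n with rfl | hn
      · rw [if_neg (by rw [Finset.mem_Icc]; omega)] at hrec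
        norm_num at hrec
        simp [hrec]
      · rw [if_pos (by rw [Finset.mem_Icc]; omega)] at hrec
        have hne : ((n : ℚ) + 1) ≠ 0 := by positivity
        have : S (n + 1) = 0 := by
          have h0 : -(((n : ℕ) + 1 : ℕ) * S (n + 1) : ℚ) = 0 := by
            rw [← hrec]; ring
          push_cast at h0
          rcases mul_eq_zero.1 (neg_eq_zero.1 h0) with h | h
          · exact absurd h hne
          · exact h
        rw [this, if_neg (by omega), if_neg (by omega)]

end AltSum

namespace AltSum

def combine {k d : ℕ} (β : k.Partition) (γ : d.Partition) : (k + d).Partition where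
  parts := β.parts + γ.parts
  parts_pos := by
    intro i hi
    rcases Multiset.mem_add.1 hi with h | h
    · exact β.parts_pos h
    · exact γ.parts_pos h
  parts_sum := by rw [Multiset.sum_add, β.parts_sum, γ.parts_sum]

lemma combine_parts {k d : ℕ} (β : k.Partition) (γ : d.Partition) :
    (combine β γ).parts = β.parts + γ.parts := rfl

lemma vanish {k m : ℕ} (β : k.Partition) (α : m.Partition) (h : ¬ β.parts ≤ α.parts) :
    (∏ i ∈ Finset.range (m + k + 1),
      ((Multiset.count i α.parts).choose (Multiset.count i β.parts) : ℚ)) = 0 := by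
  rw [Multiset.le_iff_count] at h
  push_neg at h
  obtain ⟨i, hi⟩ := h
  have hmem : i ∈ β.parts := by
    rw [← Multiset.count_pos]; omega
  have hik : i ≤ k := (Multiset.le_sum_of_mem hmem).trans_eq β.parts_sum
  refine Finset.prod_eq_zero (i := i) (by rw [Finset.mem_range]; omega) ?_
  rw [Nat.choose_eq_zero_of_lt (by omega)]
  norm_num

lemma claimB {k d : ℕ} (β : k.Partition) (γ : d.Partition) :
    ((-1 : ℚ) ^ (Multiset.card (combine β γ).parts) / zPart (combine β γ)) *
      ∏ i ∈ Finset.range ((k + d) + k + 1),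
        ((Multiset.count i (combine β γ).parts).choose (Multiset.count i β.parts) : ℚ) =
    ((-1 : ℚ) ^ (Multiset.card β.parts) / zPart β) *
      ((-1 : ℚ) ^ (Multiset.card γ.parts) / zPart γ) := by
  set R := Finset.range ((k + d) + k + 1) with hR
  rw [zPart_eq (combine β γ) (k + d + k) (by omega), zPart_eq β (k + d + k) (by omega),
    zPart_eq γ (k + d + k) (by omega)]
  have hcard : Multiset.card (combine β γ).parts =
      Multiset.card β.parts + Multiset.card γ.parts := by
    rw [combine_parts, Multiset.card_add]
  have hcount : ∀ i, Multiset.count i (combine β γ).parts =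
      Multiset.count i β.parts + Multiset.count i γ.parts := by
    intro i; rw [combine_parts, Multiset.count_add]
  have key : (∏ i ∈ R, ((Multiset.count i (combine β γ).parts).choose
        (Multiset.count i β.parts) : ℚ)) /
      (∏ i ∈ R, (i : ℚ) ^ (Multiset.count i (combine β γ).parts) *
        ((Multiset.count i (combine β γ).parts).factorial : ℚ)) =
      (∏ i ∈ R, 1 / ((i : ℚ) ^ (Multiset.count i β.parts) *
        ((Multiset.count i β.parts).factorial : ℚ))) *
      (∏ i ∈ R, 1 / ((i : ℚ) ^ (Multiset.count i γ.parts) *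
        ((Multiset.count i γ.parts).factorial : ℚ))) := by
    rw [← Finset.prod_div_distrib, ← Finset.prod_mul_distrib]
    refine Finset.prod_congr rfl ?_
    intro i _
    rw [hcount i]
    exact key_div i _ _
  rw [hcard, pow_add]
  calc ((-1 : ℚ) ^ (Multiset.card β.parts) * (-1 : ℚ) ^ (Multiset.card γ.parts)) /
        (∏ i ∈ R, (i : ℚ) ^ (Multiset.count i (combine β γ).parts) *
          ((Multiset.count i (combine β γ).parts).factorial : ℚ)) *
        ∏ i ∈ R, ((Multiset.count i (combine β γ).parts).choose
          (Multiset.count i β.parts) : ℚ)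
      = ((-1 : ℚ) ^ (Multiset.card β.parts) * (-1 : ℚ) ^ (Multiset.card γ.parts)) *
        ((∏ i ∈ R, ((Multiset.count i (combine β γ).parts).choose
          (Multiset.count i β.parts) : ℚ)) /
        (∏ i ∈ R, (i : ℚ) ^ (Multiset.count i (combine β γ).parts) *
          ((Multiset.count i (combine β γ).parts).factorial : ℚ))) := by ring
    _ = ((-1 : ℚ) ^ (Multiset.card β.parts) * (-1 : ℚ) ^ (Multiset.card γ.parts)) *
        ((∏ i ∈ R, 1 / ((i : ℚ) ^ (Multiset.count i β.parts) *
          ((Multiset.count i β.parts).factorial : ℚ))) *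
        (∏ i ∈ R, 1 / ((i : ℚ) ^ (Multiset.count i γ.parts) *
          ((Multiset.count i γ.parts).factorial : ℚ)))) := by rw [key]
    _ = _ := by
        rw [Finset.prod_div_distrib, Finset.prod_div_distrib]
        simp only [Finset.prod_const_one]
        ring

end AltSum

/-- For a fixed partition `β = 1^{b_1}2^{b_2}⋯` (of `k`) and every `m`,
`Σ_{α ⊢ m} ((-1)^{l(α)}/z_α) ∏_i C(a_i, b_i)` equals the coefficient of
`w^{m - |β|}` in `((-1)^{l(β)}/z_β)(1 - w)`, i.e. it is `(-1)^{l(β)}/z_β` if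
`m = |β|`, `-(-1)^{l(β)}/z_β` if `m = |β| + 1`, and `0` otherwise. -/
theorem alternating_partition_sum (k m : ℕ) (β : k.Partition) :
    (∑ α : m.Partition,
        ((-1 : ℚ) ^ (Multiset.card α.parts) / zPart α) *
          ∏ i ∈ Finset.range (m + k + 1),
            ((Multiset.count i α.parts).choose (Multiset.count i β.parts) : ℚ)) =
      if m = k then (-1 : ℚ) ^ (Multiset.card β.parts) / zPart β
      else if m = k + 1 then -((-1 : ℚ) ^ (Multiset.card β.parts) / zPart β)
      else 0 := by
  classical
  by_cases hk : k ≤ m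
  · obtain ⟨d, rfl⟩ : ∃ d, m = k + d := ⟨m - k, by omega⟩
    rw [← Finset.sum_filter_of_ne (p := fun α : (k + d).Partition => β.parts ≤ α.parts)
      (by
        intro α _ hne
        by_contra hle
        exact hne (by rw [AltSum.vanish β α hle, mul_zero]))]
    have hbij : (∑ α ∈ Finset.filter (fun α : (k + d).Partition => β.parts ≤ α.parts)
        Finset.univ,
        ((-1 : ℚ) ^ (Multiset.card α.parts) / zPart α) *
          ∏ i ∈ Finset.range ((k + d) + k + 1),
            ((Multiset.count i α.parts).choose (Multiset.count i β.parts) : ℚ)) =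
        ∑ γ : d.Partition, ((-1 : ℚ) ^ (Multiset.card β.parts) / zPart β) *
          ((-1 : ℚ) ^ (Multiset.card γ.parts) / zPart γ) := by
      symm
      refine Finset.sum_bij (fun (γ : d.Partition) _ => AltSum.combine β γ) ?_ ?_ ?_ ?_
      · intro γ _
        rw [Finset.mem_filter]
        exact ⟨Finset.mem_univ _, by rw [AltSum.combine_parts]; exact Multiset.le_add_right _ _⟩
      · intro γ₁ _ γ₂ _ hee
        have h1 := congrArg Nat.Partition.parts hee
        rw [AltSum.combine_parts, AltSum.combine_parts] at h1
        exact Nat.Partition.ext (add_left_cancel h1)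
      · intro α hα
        rw [Finset.mem_filter] at hα
        obtain ⟨-, hle⟩ := hα
        have hsum : (α.parts - β.parts).sum = d := by
          have h1 := congrArg Multiset.sum (add_tsub_cancel_of_le hle)
          rw [Multiset.sum_add, β.parts_sum, α.parts_sum] at h1
          omega
        refine ⟨⟨α.parts - β.parts, ?_, hsum⟩, Finset.mem_univ _, ?_⟩
        · intro i hi
          exact α.parts_pos (Multiset.mem_of_le tsub_le_self hi)
        · exact Nat.Partition.ext (by rw [AltSum.combine_parts]; exact add_tsub_cancel_of_le hle)
      · intro γ _
        exact (AltSum.claimB β γ).symm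
    rw [hbij, ← Finset.mul_sum, ← AltSum.S, AltSum.sumA d]
    rcases Nat.eq_zero_or_pos d with rfl | hd
    · rw [if_pos (by omega), if_pos (by omega)]
      norm_num
    · rcases eq_or_ne d 1 with rfl | hd1
      · rw [if_neg (by omega), if_pos (by omega), if_neg (by omega), if_pos (by omega)]
        ring
      · rw [if_neg (by omega), if_neg (by omega), if_neg (by omega), if_neg (by omega)]
        ring
  · refine Eq.trans (Finset.sum_eq_zero ?_) ?_
    · intro α _
      have hle : ¬ β.parts ≤ α.parts := by
        intro hle
        have h1 := congrArg Multiset.sum (add_tsub_cancel_of_le hle)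
        rw [Multiset.sum_add, β.parts_sum, α.parts_sum] at h1
        omega
      rw [AltSum.vanish β α hle, mul_zero]
    · rw [if_neg (by omega), if_neg (by omega)]
end

section
/- For any partition μ = (μ_1, μ_2) with two parts and μ_1 ≥ 2, and any nonnegative integers b, a: |Ξ((μ_1,μ_2), b, a)| - |Ξ((μ_2-1, μ_1+1), b, a)| = |ST(μ^t, b, a)|, where Ξ(α, b, a) is the set of fillings of the Young diagram of the composition α by letters of the alphabet A = {red 0 < blue 0 < red 1 < blue 1 < …} that are weakly increasing in each row with each red value used at most once per row, with exactly b blue entries and total numerical value a, and ST(λ, b, a) is the set of such fillings of the Young diagram of λ that are row-standard in blue entries (weakly increasing rows, each blue value at most once per row) and column-standard in red entries (weakly increasing columns, each red value at most once per column), with b blue entries and total numerical value a. -/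
/-- A letter of the alphabet `A = {red 0, blue 0, red 1, blue 1, …}`:
the pair `(i, false)` is red `i` and `(i, true)` is blue `i`; the numerical value is `i`. -/
abbrev Letter := ℕ × Bool

/-- Rank realizing the total order `red 0 < blue 0 < red 1 < blue 1 < ⋯`. -/
def rank (x : Letter) : ℕ := 2 * x.1 + (if x.2 then 1 else 0)

/-- A filling of the Young diagram of a composition `α` (row `i` has `α i` boxes). -/
def Filling {k : ℕ} (α : Fin k → ℕ) : Type := (i : Fin k) → Fin (α i) → Letter

/-- Rows weakly increasing, with each red value occurring at most once per row. -/
def RowStandardRed {k : ℕ} {α : Fin k → ℕ} (T : Filling α) : Prop :=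
  ∀ (i : Fin k) (j j' : Fin (α i)), j < j' →
    rank (T i j) ≤ rank (T i j') ∧ (T i j = T i j' → (T i j).2 = true)

/-- Rows weakly increasing, with each blue value occurring at most once per row. -/
def RowStandardBlue {k : ℕ} {α : Fin k → ℕ} (T : Filling α) : Prop :=
  ∀ (i : Fin k) (j j' : Fin (α i)), j < j' →
    rank (T i j) ≤ rank (T i j') ∧ (T i j = T i j' → (T i j).2 = false)

/-- Columns weakly increasing, with each red value occurring at most once per column. -/
def ColStandardRed {k : ℕ} {α : Fin k → ℕ} (T : Filling α) : Prop :=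
  ∀ (i i' : Fin k), i < i' → ∀ (j : ℕ) (h : j < α i) (h' : j < α i'),
    rank (T i ⟨j, h⟩) ≤ rank (T i' ⟨j, h'⟩) ∧
      (T i ⟨j, h⟩ = T i' ⟨j, h'⟩ → (T i ⟨j, h⟩).2 = true)

/-- Number of blue entries. -/
def blCount {k : ℕ} {α : Fin k → ℕ} (T : Filling α) : ℕ :=
  ∑ i, ∑ j, (if (T i j).2 then 1 else 0)

/-- Total numerical value of the entries. -/
def wtCount {k : ℕ} {α : Fin k → ℕ} (T : Filling α) : ℕ :=
  ∑ i, ∑ j, (T i j).1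

/-- `Ξ(α, b, a)`: fillings of `α` that are row-standard in the red entries, with `b`
blue entries and total numerical value `a`. -/
def Xi {k : ℕ} (α : Fin k → ℕ) (b a : ℕ) : Set (Filling α) :=
  {T | RowStandardRed T ∧ blCount T = b ∧ wtCount T = a}

/-- `SuperT(λ, b, a)`: supertableaux of shape `λ` (row-standard in blue, column-standard
in red) with `b` blue entries and total numerical value `a`. -/
def SuperT {k : ℕ} (lam : Fin k → ℕ) (b a : ℕ) : Set (Filling lam) :=
  {T | RowStandardBlue T ∧ ColStandardRed T ∧ blCount T = b ∧ wtCount T = a}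


-- ## Auxiliary development

def lr (x y : Letter) : Prop := rank x < rank y ∨ (x = y ∧ x.2 = true)
/-- `x <b y`: blue-strict (row) relation. -/
def lb (x y : Letter) : Prop := rank x < rank y ∨ (x = y ∧ x.2 = false)

lemma rank_inj {x y : Letter} (h : rank x = rank y) : x = y := by
  obtain ⟨x1, x2⟩ := x; obtain ⟨y1, y2⟩ := y
  simp only [rank] at h
  cases x2 <;> cases y2 <;> simp_all <;> omega

lemma lb_iff {x y : Letter} :
    lb x y ↔ rank x ≤ rank y ∧ (x = y → x.2 = false) := by
  constructor
  · rintro (h | ⟨rfl, h⟩)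
    · exact ⟨le_of_lt h, fun he => by subst he; omega⟩
    · exact ⟨le_rfl, fun _ => h⟩
  · rintro ⟨h1, h2⟩
    rcases lt_or_eq_of_le h1 with h | h
    · exact Or.inl h
    · exact Or.inr ⟨rank_inj h, h2 (rank_inj h)⟩

lemma lr_iff {x y : Letter} :
    lr x y ↔ rank x ≤ rank y ∧ (x = y → x.2 = true) := by
  constructor
  · rintro (h | ⟨rfl, h⟩)
    · exact ⟨le_of_lt h, fun he => by subst he; omega⟩
    · exact ⟨le_rfl, fun _ => h⟩
  · rintro ⟨h1, h2⟩
    rcases lt_or_eq_of_le h1 with h | h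
    · exact Or.inl h
    · exact Or.inr ⟨rank_inj h, h2 (rank_inj h)⟩

lemma not_lb_iff {x y : Letter} : ¬ lb x y ↔ lr y x := by
  constructor
  · intro h
    rcases lt_trichotomy (rank x) (rank y) with hc | hc | hc
    · exact absurd (Or.inl hc) h
    · have hxy := rank_inj hc
      subst hxy
      cases hx : x.2
      · exact absurd (Or.inr ⟨rfl, hx⟩) h
      · exact Or.inr ⟨rfl, hx⟩
    · exact Or.inl hc
  · rintro (h | ⟨he, h⟩) <;> rintro (h' | ⟨he', h'⟩)
    · omega
    · subst he'; omega
    · subst he; omega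
    · subst he; simp_all

lemma lr_trans {x y z : Letter} (h1 : lr x y) (h2 : lr y z) : lr x z := by
  rcases h1 with h1 | ⟨rfl, _⟩
  · rcases h2 with h2 | ⟨rfl, _⟩
    · exact Or.inl (h1.trans h2)
    · exact Or.inl h1
  · exact h2

lemma lb_lr_trans {x y z : Letter} (h1 : lb x y) (h2 : lr y z) : lr x z := by
  rcases h1 with h1 | ⟨rfl, hx⟩
  · rcases h2 with h2 | ⟨rfl, _⟩
    · exact Or.inl (h1.trans h2)
    · exact Or.inl h1
  · rcases h2 with h2 | ⟨rfl, hy⟩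
    · exact Or.inl h2
    · simp_all


open Finset

abbrev LPair := (ℕ → Letter) × (ℕ → Letter)

def Rowlr (n : ℕ) (f : ℕ → Letter) : Prop := ∀ i i', i < i' → i' < n → lr (f i) (f i')
def Padded (n : ℕ) (f : ℕ → Letter) : Prop := ∀ i, n ≤ i → f i = ((0 : ℕ), false)

def pswap (j : ℕ) (p : LPair) : LPair :=
  (fun i => if i < j then p.1 i else p.2 (i + 1),
   fun i => if i ≤ j then p.2 i else p.1 (i - 1))

lemma pswap_pswap (j : ℕ) (p : LPair) : pswap j (pswap j p) = p := by
  obtain ⟨f, g⟩ := p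
  unfold pswap
  refine Prod.ext ?_ ?_ <;> funext i <;> simp only
  · by_cases h : i < j
    · simp [h, le_of_lt h]
    · have h1 : ¬ (i + 1 ≤ j) := by omega
      simp [h, h1]
  · by_cases h : i ≤ j
    · simp [h]
    · have h1 : ¬ (i - 1 < j) := by omega
      have h2 : i - 1 + 1 = i := by omega
      simp [h, h1, h2]

def gsum (g : Letter → ℕ) (n m : ℕ) (p : LPair) : ℕ :=
  ∑ i ∈ range n, g (p.1 i) + ∑ i ∈ range m, g (p.2 i)

lemma sum_padded (g : Letter → ℕ) (hg : g ((0 : ℕ), false) = 0) {n N : ℕ} {f : ℕ → Letter}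
    (hp : Padded n f) (hN : n ≤ N) :
    ∑ i ∈ range N, g (f i) = ∑ i ∈ range n, g (f i) := by
  refine (Finset.sum_subset (Finset.range_subset_range.mpr hN) ?_).symm
  intro i _ hi
  rw [hp i (by simpa using hi)]
  exact hg

lemma sum_shift (g : ℕ → ℕ) (c d : ℕ) (hcd : c ≤ d) :
    ∑ i ∈ Finset.Ico c d, g (i + 1) = ∑ i ∈ Finset.Ico (c + 1) (d + 1), g i := by
  rw [Finset.sum_Ico_eq_sum_range, Finset.sum_Ico_eq_sum_range]
  have : d + 1 - (c + 1) = d - c := by omega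
  rw [this]
  exact Finset.sum_congr rfl (fun i _ => by congr 1; omega)

lemma gsum_pswap (g : Letter → ℕ) (hg : g ((0 : ℕ), false) = 0) (n1 n2 j : ℕ)
    (p : LPair) (hp1 : Padded n1 p.1) (hp2 : Padded n2 p.2)
    (hj1 : j ≤ n1) (hj2 : j ≤ n2 - 1) (hn2 : 1 ≤ n2) :
    gsum g (n2 - 1) (n1 + 1) (pswap j p) = gsum g n1 n2 p := by
  obtain ⟨f1, f2⟩ := p
  simp only [Padded] at hp1 hp2
  set K := j + n1 + n2 + 1 with hK
  have hq1 : Padded (n2 - 1) (pswap j (f1, f2)).1 := by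
    intro i hi
    simp only [pswap]
    rw [if_neg (by omega)]
    exact hp2 _ (by omega)
  have hq2 : Padded (n1 + 1) (pswap j (f1, f2)).2 := by
    intro i hi
    simp only [pswap]
    rw [if_neg (by omega)]
    exact hp1 _ (by omega)
  unfold gsum
  rw [← sum_padded g hg hq1 (by omega : n2 - 1 ≤ K),
      ← sum_padded g hg hq2 (by omega : n1 + 1 ≤ K + 1)]
  conv_rhs => rw [← sum_padded g hg hp1 (by omega : n1 ≤ K),
      ← sum_padded g hg hp2 (by omega : n2 ≤ K + 1)]
  simp only [pswap]
  rw [Finset.range_eq_Ico, ← Finset.sum_Ico_consecutive _ (Nat.zero_le j) (by omega : j ≤ K),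
      Finset.range_eq_Ico, ← Finset.sum_Ico_consecutive _ (Nat.zero_le (j+1)) (by omega : j + 1 ≤ K + 1)]
  have e1 : ∑ i ∈ Finset.Ico 0 j, g (if i < j then f1 i else f2 (i+1)) =
      ∑ i ∈ Finset.Ico 0 j, g (f1 i) :=
    Finset.sum_congr rfl (fun i hi => by rw [if_pos (by simp at hi; omega)])
  have e2 : ∑ i ∈ Finset.Ico j K, g (if i < j then f1 i else f2 (i+1)) =
      ∑ i ∈ Finset.Ico (j+1) (K+1), g (f2 i) := by
    rw [← sum_shift (fun i => g (f2 i)) j K (by omega)]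
    exact Finset.sum_congr rfl (fun i hi => by rw [if_neg (by simp at hi; omega)])
  have e3 : ∑ i ∈ Finset.Ico 0 (j+1), g (if i ≤ j then f2 i else f1 (i-1)) =
      ∑ i ∈ Finset.Ico 0 (j+1), g (f2 i) :=
    Finset.sum_congr rfl (fun i hi => by rw [if_pos (by simp at hi; omega)])
  have e4 : ∑ i ∈ Finset.Ico (j+1) (K+1), g (if i ≤ j then f2 i else f1 (i-1)) =
      ∑ i ∈ Finset.Ico j K, g (f1 i) := by
    have step1 : ∑ i ∈ Finset.Ico (j+1) (K+1), g (if i ≤ j then f2 i else f1 (i-1)) =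
        ∑ i ∈ Finset.Ico (j+1) (K+1), g (f1 (i-1)) :=
      Finset.sum_congr rfl (fun i hi => by
        simp only [Finset.mem_Ico] at hi; rw [if_neg (by omega)])
    rw [step1, ← sum_shift (fun i => g (f1 (i - 1))) j K (by omega)]
    exact Finset.sum_congr rfl (fun i _ => by norm_num)
  rw [e1, e2, e3, e4]
  have h1 : ∑ i ∈ Finset.Ico 0 j, g (f1 i) + ∑ i ∈ Finset.Ico j K, g (f1 i) =
      ∑ i ∈ Finset.Ico 0 K, g (f1 i) :=
    Finset.sum_Ico_consecutive _ (Nat.zero_le j) (by omega)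
  have h2 : ∑ i ∈ Finset.Ico 0 (j+1), g (f2 i) + ∑ i ∈ Finset.Ico (j+1) (K+1), g (f2 i) =
      ∑ i ∈ Finset.Ico 0 (K+1), g (f2 i) :=
    Finset.sum_Ico_consecutive _ (Nat.zero_le (j+1)) (by omega)
  omega

lemma lb_iff_not_lr {x y : Letter} : lb x y ↔ ¬ lr y x := by
  rw [← not_lb_iff, not_not]

def lrle (x y : Letter) : Prop := lr x y ∨ x = y

lemma Rowlr.lrle {n : ℕ} {f : ℕ → Letter} (h : Rowlr n f) {i i' : ℕ}
    (hii : i ≤ i') (hn : i' < n) : lrle (f i) (f i') := by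
  rcases lt_or_eq_of_le hii with h' | h'
  · exact Or.inl (h i i' h' hn)
  · exact Or.inr (by rw [h'])

lemma lrle_lr_trans {x y z : Letter} (h1 : lrle x y) (h2 : lr y z) : lr x z := by
  rcases h1 with h1 | rfl
  · exact lr_trans h1 h2
  · exact h2

lemma lr_lrle_trans {x y z : Letter} (h1 : lr x y) (h2 : lrle y z) : lr x z := by
  rcases h2 with h2 | rfl
  · exact lr_trans h1 h2
  · exact h1

def blg (x : Letter) : ℕ := if x.2 then 1 else 0
def wtg (x : Letter) : ℕ := x.1

/-- The pair-of-rows model for `Ξ((n,m), b, a)`. -/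
def EE (n m b a : ℕ) : Set LPair :=
  {p | Rowlr n p.1 ∧ Rowlr m p.2 ∧ Padded n p.1 ∧ Padded m p.2 ∧
    gsum blg n m p = b ∧ gsum wtg n m p = a}

open scoped Classical

/-- The first violation below `m`, or `m` if none. -/
noncomputable def cut (m : ℕ) (p : LPair) : ℕ :=
  if h : ∃ j, j < m ∧ lr (p.2 j) (p.1 j) then Nat.find h else m

section Swap

variable {μ1 μ2 b a : ℕ}

lemma fwd (h21 : μ2 ≤ μ1) (h2 : 1 ≤ μ2) {p : LPair}
    (hp : p ∈ EE μ1 μ2 b a) (hv : ∃ j, j < μ2 ∧ lr (p.2 j) (p.1 j)) :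
    pswap (cut μ2 p) p ∈ EE (μ2 - 1) (μ1 + 1) b a ∧
      cut (μ2 - 1) (pswap (cut μ2 p) p) = cut μ2 p := by
  obtain ⟨h1, h2', h3, h4, h5, h6⟩ := hp
  have hcut : cut μ2 p = Nat.find hv := by rw [cut, dif_pos hv]
  set j := cut μ2 p with hj
  have hjv : j < μ2 ∧ lr (p.2 j) (p.1 j) := hcut ▸ Nat.find_spec hv
  have hmin : ∀ i, i < j → ¬ (i < μ2 ∧ lr (p.2 i) (p.1 i)) := by
    intro i hi; rw [hcut] at hi; exact Nat.find_min hv hi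
  have hminb : ∀ i, i < j → lb (p.1 i) (p.2 i) := by
    intro i hi
    rw [lb_iff_not_lr]
    intro hl
    exact hmin i hi ⟨lt_trans hi hjv.1, hl⟩
  have hq1 : Rowlr (μ2 - 1) (pswap j p).1 := by
    intro i i' hii hn
    simp only [pswap]
    by_cases hi' : i' < j
    · rw [if_pos hi', if_pos (lt_trans hii hi')]
      exact h1 i i' hii (by omega)
    · rw [if_neg hi']
      by_cases hi : i < j
      · rw [if_pos hi]
        exact lb_lr_trans (hminb i hi) (h2' i (i' + 1) (by omega) (by omega))
      · rw [if_neg hi]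
        exact h2' (i + 1) (i' + 1) (by omega) (by omega)
  have hq2 : Rowlr (μ1 + 1) (pswap j p).2 := by
    intro i i' hii hn
    simp only [pswap]
    by_cases hi' : i' ≤ j
    · rw [if_pos hi', if_pos (le_of_lt (lt_of_lt_of_le hii hi'))]
      exact h2' i i' hii (by omega)
    · rw [if_neg hi']
      by_cases hi : i ≤ j
      · rw [if_pos hi]
        refine lrle_lr_trans (Rowlr.lrle h2' hi hjv.1) (lr_lrle_trans hjv.2 ?_)
        exact Rowlr.lrle h1 (by omega) (by omega)
      · rw [if_neg hi]
        exact h1 (i - 1) (i' - 1) (by omega) (by omega)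
  have hp1 : Padded (μ2 - 1) (pswap j p).1 := by
    intro i hi
    simp only [pswap]
    rw [if_neg (by omega)]
    exact h4 _ (by omega)
  have hp2 : Padded (μ1 + 1) (pswap j p).2 := by
    intro i hi
    simp only [pswap]
    rw [if_neg (by omega)]
    exact h3 _ (by omega)
  have hbl : gsum blg (μ2 - 1) (μ1 + 1) (pswap j p) = b := by
    rw [gsum_pswap blg rfl μ1 μ2 j p h3 h4 (by omega) (by omega) h2]; exact h5
  have hwt : gsum wtg (μ2 - 1) (μ1 + 1) (pswap j p) = a := by
    rw [gsum_pswap wtg rfl μ1 μ2 j p h3 h4 (by omega) (by omega) h2]; exact h6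
  refine ⟨⟨hq1, hq2, hp1, hp2, hbl, hwt⟩, ?_⟩
  -- the cut of the swapped pair is again j
  have hnov : ∀ i, i < j → ¬ lr ((pswap j p).2 i) ((pswap j p).1 i) := by
    intro i hi
    simp only [pswap]
    rw [if_pos hi, if_pos (le_of_lt hi)]
    intro hl
    exact hmin i hi ⟨by omega, hl⟩
  by_cases hcase : j < μ2 - 1
  · have hvq : ∃ i, i < μ2 - 1 ∧ lr ((pswap j p).2 i) ((pswap j p).1 i) := by
      refine ⟨j, hcase, ?_⟩
      simp only [pswap]
      rw [if_neg (lt_irrefl j), if_pos (le_refl j)]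
      exact h2' j (j + 1) (by omega) (by omega)
    rw [cut, dif_pos hvq]
    rw [Nat.find_eq_iff]
    constructor
    · refine ⟨hcase, ?_⟩
      simp only [pswap]
      rw [if_neg (lt_irrefl j), if_pos (le_refl j)]
      exact h2' j (j + 1) (by omega) (by omega)
    · intro i hi
      rintro ⟨-, hl⟩
      exact hnov i hi hl
  · have hj2 : j = μ2 - 1 := by omega
    have hvq : ¬ ∃ i, i < μ2 - 1 ∧ lr ((pswap j p).2 i) ((pswap j p).1 i) := by
      rintro ⟨i, hi, hl⟩
      exact hnov i (by omega) hl
    rw [cut, dif_neg hvq, hj2]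

lemma bwd (h21 : μ2 ≤ μ1) (h2 : 1 ≤ μ2) {q : LPair}
    (hq : q ∈ EE (μ2 - 1) (μ1 + 1) b a) :
    pswap (cut (μ2 - 1) q) q ∈ EE μ1 μ2 b a ∧
      (cut (μ2 - 1) q < μ2 ∧
        lr ((pswap (cut (μ2 - 1) q) q).2 (cut (μ2 - 1) q))
           ((pswap (cut (μ2 - 1) q) q).1 (cut (μ2 - 1) q))) ∧
      cut μ2 (pswap (cut (μ2 - 1) q) q) = cut (μ2 - 1) q := by
  obtain ⟨h1, h2', h3, h4, h5, h6⟩ := hq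
  set j := cut (μ2 - 1) q with hj
  have hjle : j ≤ μ2 - 1 := by
    rw [hj, cut]
    split
    · next h => exact le_of_lt (Nat.find_spec h).1
    · exact le_refl _
  have hmin : ∀ i, i < j → ¬ lr (q.2 i) (q.1 i) := by
    intro i hi
    rw [hj, cut] at hi
    split at hi
    · next h => exact fun hl => (Nat.find_min h hi) ⟨by
        have := (Nat.find_spec h).1; omega, hl⟩
    · next h => exact fun hl => h ⟨i, by omega, hl⟩
  have hvj : j < μ2 - 1 → lr (q.2 j) (q.1 j) := by
    intro hlt
    rw [hj, cut]
    rw [hj, cut] at hlt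
    split at hlt
    · next h => rw [dif_pos h]; exact (Nat.find_spec h).2
    · omega
  have hminb : ∀ i, i < j → lb (q.1 i) (q.2 i) := fun i hi =>
    lb_iff_not_lr.mpr (hmin i hi)
  have hr1 : Rowlr μ1 (pswap j q).1 := by
    intro i i' hii hn
    simp only [pswap]
    by_cases hi' : i' < j
    · rw [if_pos hi', if_pos (lt_trans hii hi')]
      exact h1 i i' hii (by omega)
    · rw [if_neg hi']
      by_cases hi : i < j
      · rw [if_pos hi]
        exact lb_lr_trans (hminb i hi) (h2' i (i' + 1) (by omega) (by omega))
      · rw [if_neg hi]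
        exact h2' (i + 1) (i' + 1) (by omega) (by omega)
  have hr2 : Rowlr μ2 (pswap j q).2 := by
    intro i i' hii hn
    simp only [pswap]
    by_cases hi' : i' ≤ j
    · rw [if_pos hi', if_pos (le_of_lt (lt_of_lt_of_le hii hi'))]
      exact h2' i i' hii (by omega)
    · rw [if_neg hi']
      have hjlt : j < μ2 - 1 := by omega
      by_cases hi : i ≤ j
      · rw [if_pos hi]
        refine lrle_lr_trans (Rowlr.lrle h2' hi (by omega)) (lr_lrle_trans (hvj hjlt) ?_)
        exact Rowlr.lrle h1 (by omega) (by omega)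
      · rw [if_neg hi]
        exact h1 (i - 1) (i' - 1) (by omega) (by omega)
  have hp1 : Padded μ1 (pswap j q).1 := by
    intro i hi
    simp only [pswap]
    rw [if_neg (by omega)]
    exact h4 _ (by omega)
  have hp2 : Padded μ2 (pswap j q).2 := by
    intro i hi
    simp only [pswap]
    rw [if_neg (by omega)]
    exact h3 _ (by omega)
  have hbl : gsum blg μ1 μ2 (pswap j q) = b := by
    have := gsum_pswap blg rfl (μ2 - 1) (μ1 + 1) j q h3 h4 (by omega) (by omega) (by omega)
    have he1 : μ1 + 1 - 1 = μ1 := by omega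
    have he2 : μ2 - 1 + 1 = μ2 := by omega
    rw [he1, he2] at this
    rw [this]; exact h5
  have hwt : gsum wtg μ1 μ2 (pswap j q) = a := by
    have := gsum_pswap wtg rfl (μ2 - 1) (μ1 + 1) j q h3 h4 (by omega) (by omega) (by omega)
    have he1 : μ1 + 1 - 1 = μ1 := by omega
    have he2 : μ2 - 1 + 1 = μ2 := by omega
    rw [he1, he2] at this
    rw [this]; exact h6
  have hviolj : lr ((pswap j q).2 j) ((pswap j q).1 j) := by
    simp only [pswap]
    rw [if_neg (lt_irrefl j), if_pos (le_refl j)]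
    exact h2' j (j + 1) (by omega) (by omega)
  refine ⟨⟨hr1, hr2, hp1, hp2, hbl, hwt⟩, ⟨by omega, hviolj⟩, ?_⟩
  have hvq : ∃ i, i < μ2 ∧ lr ((pswap j q).2 i) ((pswap j q).1 i) :=
    ⟨j, by omega, hviolj⟩
  rw [cut, dif_pos hvq, Nat.find_eq_iff]
  refine ⟨⟨by omega, hviolj⟩, ?_⟩
  intro i hi
  rintro ⟨-, hl⟩
  refine hmin i hi ?_
  simpa only [pswap, if_pos hi, if_pos (le_of_lt hi)] using hl

end Swap

lemma EE_ncard_eq {μ1 μ2 b a : ℕ} (h21 : μ2 ≤ μ1) (h2 : 1 ≤ μ2)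
    (hfin : (EE μ1 μ2 b a).Finite) :
    (EE μ1 μ2 b a).ncard =
      (EE μ1 μ2 b a ∩ {p | ∀ j, j < μ2 → lb (p.1 j) (p.2 j)}).ncard
        + (EE (μ2 - 1) (μ1 + 1) b a).ncard := by
  classical
  set C := EE μ1 μ2 b a ∩ {p | ∀ j, j < μ2 → lb (p.1 j) (p.2 j)} with hC
  set I := EE μ1 μ2 b a ∩ {p | ∃ j, j < μ2 ∧ lr (p.2 j) (p.1 j)} with hI
  have hunion : EE μ1 μ2 b a = C ∪ I := by
    ext p
    constructor
    · intro hp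
      by_cases hc : ∀ j, j < μ2 → lb (p.1 j) (p.2 j)
      · exact Or.inl ⟨hp, hc⟩
      · push_neg at hc
        obtain ⟨j, hj, hl⟩ := hc
        rw [lb_iff_not_lr, not_not] at hl
        exact Or.inr ⟨hp, j, hj, hl⟩
    · rintro (⟨hp, -⟩ | ⟨hp, -⟩) <;> exact hp
  have hdisj : Disjoint C I := by
    rw [Set.disjoint_left]
    rintro p ⟨-, hc⟩ ⟨-, j, hj, hl⟩
    exact (lb_iff_not_lr.mp (hc j hj)) hl
  have hCfin : C.Finite := hfin.subset (Set.inter_subset_left)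
  have hIfin : I.Finite := hfin.subset (Set.inter_subset_left)
  -- the bijection between I and EE (μ2-1) (μ1+1)
  set F : LPair → LPair := fun p => pswap (cut μ2 p) p with hF
  set G : LPair → LPair := fun q => pswap (cut (μ2 - 1) q) q with hG
  have hGF : ∀ p ∈ I, G (F p) = p := by
    rintro p ⟨hp, hv⟩
    obtain ⟨-, hcut⟩ := fwd h21 h2 hp hv
    simp only [hF, hG, hcut, pswap_pswap]
  have hFG : ∀ q ∈ EE (μ2 - 1) (μ1 + 1) b a, F (G q) = q := by
    intro q hq
    obtain ⟨-, -, hcut⟩ := bwd h21 h2 hq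
    simp only [hF, hG, hcut, pswap_pswap]
  have himg : F '' I = EE (μ2 - 1) (μ1 + 1) b a := by
    apply Set.Subset.antisymm
    · rintro _ ⟨p, ⟨hp, hv⟩, rfl⟩
      exact (fwd h21 h2 hp hv).1
    · intro q hq
      obtain ⟨hmem, hviol, -⟩ := bwd h21 h2 hq
      exact ⟨G q, ⟨hmem, cut (μ2 - 1) q, hviol⟩, hFG q hq⟩
  have hinj : Set.InjOn F I := by
    intro p hp p' hp' heq
    rw [← hGF p hp, ← hGF p' hp', heq]
  rw [hunion, Set.ncard_union_eq hdisj hCfin hIfin, ← himg,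
    Set.ncard_image_of_injOn hinj]


lemma fin_sum_dite {n : ℕ} (f : Fin n → ℕ) :
    ∑ j : Fin n, f j = ∑ i ∈ Finset.range n, (if h : i < n then f ⟨i, h⟩ else 0) := by
  rw [← Fin.sum_univ_eq_sum_range (fun i => if h : i < n then f ⟨i, h⟩ else 0) n]
  exact Finset.sum_congr rfl (fun i _ => by rw [dif_pos i.isLt])

section Enc1

variable {n m b a : ℕ}

def enc1 {n m : ℕ} (T : Filling ![n, m]) : LPair :=
  (fun i => if h : i < n then T 0 ⟨i, h⟩ else ((0:ℕ), false),
   fun i => if h : i < m then T 1 ⟨i, h⟩ else ((0:ℕ), false))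

lemma gsum_enc1 (g : Letter → ℕ) (hg : g ((0:ℕ), false) = 0) (T : Filling ![n, m]) :
    ∑ i, ∑ j, g (T i j) = gsum g n m (enc1 T) := by
  rw [Fin.sum_univ_two (fun i => ∑ j, g (T i j))]
  unfold gsum enc1
  simp only
  congr 1
  · rw [fin_sum_dite (fun j => g (T 0 j))]
    exact Finset.sum_congr rfl (fun i _ => by rw [apply_dite g]; simp [hg]; congr)
  · rw [fin_sum_dite (fun j => g (T 1 j))]
    exact Finset.sum_congr rfl (fun i _ => by rw [apply_dite g]; simp [hg]; congr)

lemma blCount_enc1 (T : Filling ![n, m]) : blCount T = gsum blg n m (enc1 T) :=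
  gsum_enc1 blg rfl T

lemma wtCount_enc1 (T : Filling ![n, m]) : wtCount T = gsum wtg n m (enc1 T) :=
  gsum_enc1 wtg rfl T

lemma rsr_iff (T : Filling ![n, m]) :
    RowStandardRed T ↔ Rowlr n (enc1 T).1 ∧ Rowlr m (enc1 T).2 := by
  constructor
  · intro h
    constructor
    · intro i i' hii hn
      simp only [enc1]
      rw [dif_pos (lt_trans hii hn), dif_pos hn]
      exact lr_iff.mpr (h 0 ⟨i, lt_trans hii hn⟩ ⟨i', hn⟩ hii)
    · intro i i' hii hn
      simp only [enc1]
      rw [dif_pos (lt_trans hii hn), dif_pos hn]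
      exact lr_iff.mpr (h 1 ⟨i, lt_trans hii hn⟩ ⟨i', hn⟩ hii)
  · rintro ⟨ha, hb⟩ i j j' hjj
    obtain ⟨iv, hiv⟩ := i
    interval_cases iv
    · have := ha ↑j ↑j' hjj j'.isLt
      simp only [enc1] at this
      rw [dif_pos (show (j:ℕ) < n from j.isLt),
        dif_pos (show (j':ℕ) < n from j'.isLt)] at this
      exact lr_iff.mp this
    · have := hb ↑j ↑j' hjj j'.isLt
      simp only [enc1] at this
      rw [dif_pos (show (j:ℕ) < m from j.isLt),
        dif_pos (show (j':ℕ) < m from j'.isLt)] at this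
      exact lr_iff.mp this

lemma enc1_inj : Function.Injective (@enc1 n m) := by
  intro T T' h
  have h1 := congrArg Prod.fst h
  have h2 := congrArg Prod.snd h
  funext i j
  obtain ⟨iv, hiv⟩ := i
  interval_cases iv
  · have := congrFun h1 ↑j
    simp only [enc1] at this
    rwa [dif_pos (show (j:ℕ) < n from j.isLt),
      dif_pos (show (j:ℕ) < n from j.isLt)] at this
  · have := congrFun h2 ↑j
    simp only [enc1] at this
    rwa [dif_pos (show (j:ℕ) < m from j.isLt),
      dif_pos (show (j:ℕ) < m from j.isLt)] at this

lemma EE_eq_image : EE n m b a = enc1 '' Xi ![n, m] b a := by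
  apply Set.Subset.antisymm
  · rintro p ⟨h1, h2, h3, h4, h5, h6⟩
    set T : Filling ![n, m] :=
      fun i => if i = (0 : Fin 2) then (fun j => p.1 ↑j) else (fun j => p.2 ↑j) with hT
    have hT0 : T 0 = fun j : Fin (![n, m] 0) => p.1 ↑j := by
      rw [hT]; simp
    have hT1 : T 1 = fun j : Fin (![n, m] 1) => p.2 ↑j := by
      rw [hT]; simp
    have henc : enc1 T = p := by
      refine Prod.ext ?_ ?_ <;> funext i <;> simp only [enc1]
      · by_cases h : i < n
        · rw [dif_pos h, hT0]
        · rw [dif_neg h]; exact (h3 i (by omega)).symm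
      · by_cases h : i < m
        · rw [dif_pos h, hT1]
        · rw [dif_neg h]; exact (h4 i (by omega)).symm
    exact ⟨T, ⟨(rsr_iff T).mpr (by rw [henc]; exact ⟨h1, h2⟩),
      by rw [blCount_enc1, henc]; exact h5,
      by rw [wtCount_enc1, henc]; exact h6⟩, henc⟩
  · rintro _ ⟨T, ⟨hT, hb, ha⟩, rfl⟩
    obtain ⟨hr1, hr2⟩ := (rsr_iff T).mp hT
    refine ⟨hr1, hr2, ?_, ?_, ?_, ?_⟩
    · intro i hi; simp only [enc1]; rw [dif_neg (by omega)]
    · intro i hi; simp only [enc1]; rw [dif_neg (by omega)]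
    · rw [← blCount_enc1]; exact hb
    · rw [← wtCount_enc1]; exact ha

end Enc1


lemma entry_le_wt {k : ℕ} {α : Fin k → ℕ} (T : Filling α) (i : Fin k) (j : Fin (α i)) :
    (T i j).1 ≤ wtCount T := by
  calc (T i j).1 ≤ ∑ j', (T i j').1 :=
        Finset.single_le_sum (f := fun j' => (T i j').1)
          (fun _ _ => Nat.zero_le _) (Finset.mem_univ j)
    _ ≤ ∑ i', ∑ j', (T i' j').1 :=
        Finset.single_le_sum (f := fun i' => ∑ j', (T i' j').1)
          (fun _ _ => Nat.zero_le _) (Finset.mem_univ i)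
    _ = wtCount T := rfl

lemma bounded_finite {k : ℕ} (α : Fin k → ℕ) (a : ℕ) :
    {T : Filling α | ∀ i j, (T i j).1 ≤ a}.Finite := by
  have hset : {T : Filling α | ∀ i j, (T i j).1 ≤ a} =
      Set.univ.pi (fun i => Set.univ.pi (fun _ => {x : Letter | x.1 ≤ a})) := by
    ext T
    constructor
    · exact fun h i _ j _ => h i j
    · exact fun h i j => h i (Set.mem_univ i) j (Set.mem_univ j)
  rw [hset]
  refine Set.Finite.pi (fun i => Set.Finite.pi (fun j => ?_))
  have : {x : Letter | x.1 ≤ a} = Set.Iic a ×ˢ (Set.univ : Set Bool) := by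
    ext x; simp
  rw [this]
  exact (Set.finite_Iic a).prod Set.finite_univ

lemma Xi_finite {k : ℕ} (α : Fin k → ℕ) (b a : ℕ) : (Xi α b a).Finite := by
  refine (bounded_finite α a).subset ?_
  rintro T ⟨-, -, hw⟩ i j
  simpa [hw] using entry_le_wt T i j

lemma SuperT_finite {k : ℕ} (lam : Fin k → ℕ) (b a : ℕ) : (SuperT lam b a).Finite := by
  refine (bounded_finite lam a).subset ?_
  rintro T ⟨-, -, -, hw⟩ i j
  simpa [hw] using entry_le_wt T i j

lemma Xi_ncard_EE {n m b a : ℕ} : (Xi ![n, m] b a).ncard = (EE n m b a).ncard := by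
  rw [EE_eq_image, Set.ncard_image_of_injOn (enc1_inj.injOn)]

lemma EE_finite (n m b a : ℕ) : (EE n m b a).Finite := by
  rw [EE_eq_image]
  exact (Xi_finite ![n, m] b a).image _


section Enc2

variable {μ1 μ2 b a : ℕ}

abbrev lamF (μ1 μ2 : ℕ) : Fin μ1 → ℕ := fun j => if (j : ℕ) < μ2 then 2 else 1

lemma lamF_pos (i : Fin μ1) : 0 < lamF μ1 μ2 i := by
  show 0 < if (i : ℕ) < μ2 then 2 else 1
  split <;> omega

lemma lamF_le_two (i : Fin μ1) : lamF μ1 μ2 i ≤ 2 := by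
  show (if (i : ℕ) < μ2 then 2 else 1) ≤ 2
  split <;> omega

lemma lamF_two {i : Fin μ1} (h : (i : ℕ) < μ2) : lamF μ1 μ2 i = 2 := by
  show (if (i : ℕ) < μ2 then 2 else 1) = 2
  rw [if_pos h]

lemma lamF_one {i : Fin μ1} (h : ¬ (i : ℕ) < μ2) : lamF μ1 μ2 i = 1 := by
  show (if (i : ℕ) < μ2 then 2 else 1) = 1
  rw [if_neg h]

lemma one_lt_lamF {i : Fin μ1} (h : (i : ℕ) < μ2) : 1 < lamF μ1 μ2 i := by
  rw [lamF_two h]; omega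

lemma lamF_lt_two {i : Fin μ1} (h : 1 < lamF μ1 μ2 i) : (i : ℕ) < μ2 := by
  by_contra hc
  rw [lamF_one hc] at h
  omega

def enc2 {μ1 μ2 : ℕ} (h21 : μ2 ≤ μ1) (T : Filling (lamF μ1 μ2)) : LPair :=
  (fun i => if h : i < μ1 then T ⟨i, h⟩ ⟨0, lamF_pos _⟩ else ((0:ℕ), false),
   fun i => if h : i < μ2 then
      T ⟨i, lt_of_lt_of_le h h21⟩ ⟨1, one_lt_lamF (by exact h)⟩ else ((0:ℕ), false))

lemma sum_fin_two' {n : ℕ} (h : n = 2) (f : Fin n → ℕ) :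
    ∑ j, f j = f ⟨0, by omega⟩ + f ⟨1, by omega⟩ := by
  subst h
  rw [Fin.sum_univ_two]
  rfl

lemma sum_fin_one' {n : ℕ} (h : n = 1) (f : Fin n → ℕ) :
    ∑ j, f j = f ⟨0, by omega⟩ := by
  subst h
  rw [Fin.sum_univ_one]
  rfl

lemma gsum_enc2 (h21 : μ2 ≤ μ1) (g : Letter → ℕ) (T : Filling (lamF μ1 μ2)) :
    ∑ i, ∑ j, g (T i j) = gsum g μ1 μ2 (enc2 h21 T) := by
  have key : ∀ i : Fin μ1, ∑ j, g (T i j) =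
      g ((enc2 h21 T).1 ↑i) + (if (i : ℕ) < μ2 then g ((enc2 h21 T).2 ↑i) else 0) := by
    intro i
    by_cases hc : (i : ℕ) < μ2
    · rw [sum_fin_two' (lamF_two hc) (fun j => g (T i j)), if_pos hc]
      simp only [enc2]
      rw [dif_pos i.isLt, dif_pos hc]
    · rw [sum_fin_one' (lamF_one hc) (fun j => g (T i j)), if_neg hc]
      simp only [enc2]
      rw [dif_pos i.isLt, add_zero]
  rw [Finset.sum_congr rfl (fun i _ => key i), Finset.sum_add_distrib]
  unfold gsum
  congr 1
  · exact Fin.sum_univ_eq_sum_range (fun i => g ((enc2 h21 T).1 i)) μ1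
  · rw [Fin.sum_univ_eq_sum_range (fun i => if i < μ2 then g ((enc2 h21 T).2 i) else 0) μ1,
      ← Finset.sum_subset (Finset.range_subset_range.mpr h21)
        (fun x _ hx => if_neg (by simpa using hx))]
    exact Finset.sum_congr rfl (fun i hi => if_pos (Finset.mem_range.mp hi))

lemma superT_iff (h21 : μ2 ≤ μ1) (T : Filling (lamF μ1 μ2)) :
    (RowStandardBlue T ∧ ColStandardRed T) ↔
      Rowlr μ1 (enc2 h21 T).1 ∧ Rowlr μ2 (enc2 h21 T).2 ∧
        ∀ i, i < μ2 → lb ((enc2 h21 T).1 i) ((enc2 h21 T).2 i) := by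
  constructor
  · rintro ⟨hrow, hcol⟩
    refine ⟨?_, ?_, ?_⟩
    · intro i i' hii hn
      simp only [enc2]
      rw [dif_pos (by omega : i < μ1), dif_pos hn]
      exact lr_iff.mpr
        (hcol ⟨i, by omega⟩ ⟨i', hn⟩ (Fin.mk_lt_mk.mpr hii) 0 (lamF_pos _) (lamF_pos _))
    · intro i i' hii hn
      simp only [enc2]
      rw [dif_pos (by omega : i < μ2), dif_pos hn]
      exact lr_iff.mpr
        (hcol ⟨i, by omega⟩ ⟨i', by omega⟩ (Fin.mk_lt_mk.mpr hii) 1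
          (one_lt_lamF (by exact (by omega : i < μ2)))
          (one_lt_lamF (by exact hn)))
    · intro i him
      have := hrow ⟨i, by omega⟩ ⟨0, lamF_pos _⟩ ⟨1, one_lt_lamF (by exact him)⟩
        (Fin.mk_lt_mk.mpr Nat.zero_lt_one)
      simp only [enc2]
      rw [dif_pos (by omega : i < μ1), dif_pos him]
      exact lb_iff.mpr this
  · rintro ⟨h1, h2, h3⟩
    constructor
    · intro i j j' hjj
      have hjlt : (j : ℕ) < (j' : ℕ) := hjj
      have hj'lt : (j' : ℕ) < lamF μ1 μ2 i := j'.isLt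
      have hi2 : (i : ℕ) < μ2 := lamF_lt_two (by omega)
      have hl2 : lamF μ1 μ2 i = 2 := lamF_two hi2
      have hj0 : j = ⟨0, lamF_pos i⟩ := Fin.ext (by show (j : ℕ) = 0; omega)
      have hj1 : j' = ⟨1, one_lt_lamF hi2⟩ := Fin.ext (by show (j' : ℕ) = 1; omega)
      rw [hj0, hj1]
      have := lb_iff.mp (h3 ↑i hi2)
      simp only [enc2] at this
      rw [dif_pos i.isLt, dif_pos hi2] at this
      exact this
    · intro i i' hii j hj hj'
      have hle : lamF μ1 μ2 i ≤ 2 := lamF_le_two i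
      have hj01 : j = 0 ∨ j = 1 := by omega
      rcases hj01 with rfl | rfl
      · have := h1 ↑i ↑i' (show (i : ℕ) < (i' : ℕ) from hii) i'.isLt
        simp only [enc2] at this
        rw [dif_pos i.isLt, dif_pos i'.isLt] at this
        exact lr_iff.mp this
      · have hi'2 : (i' : ℕ) < μ2 := lamF_lt_two hj'
        have hi2 : (i : ℕ) < μ2 := by
          have : (i : ℕ) < (i' : ℕ) := hii
          omega
        have := h2 ↑i ↑i' (show (i : ℕ) < (i' : ℕ) from hii) hi'2
        simp only [enc2] at this
        rw [dif_pos hi2, dif_pos hi'2] at this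
        exact lr_iff.mp this

lemma enc2_inj (h21 : μ2 ≤ μ1) :
    Function.Injective (enc2 (μ1 := μ1) (μ2 := μ2) h21) := by
  intro T T' h
  have h1 := congrFun (congrArg Prod.fst h)
  have h2 := congrFun (congrArg Prod.snd h)
  funext i j
  by_cases hj : (j : ℕ) = 0
  · have hj0 : j = ⟨0, lamF_pos i⟩ := Fin.ext hj
    rw [hj0]
    have := h1 ↑i
    simp only [enc2] at this
    rw [dif_pos i.isLt, dif_pos i.isLt] at this
    exact this
  · have hjlt : (j : ℕ) < lamF μ1 μ2 i := j.isLt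
    have hi2 : (i : ℕ) < μ2 := lamF_lt_two (by omega)
    have hle : lamF μ1 μ2 i ≤ 2 := lamF_le_two i
    have hj1 : j = ⟨1, one_lt_lamF hi2⟩ := Fin.ext (by show (j : ℕ) = 1; omega)
    rw [hj1]
    have := h2 ↑i
    simp only [enc2] at this
    rw [dif_pos hi2, dif_pos hi2] at this
    exact this

lemma compat_eq_image (h21 : μ2 ≤ μ1) :
    EE μ1 μ2 b a ∩ {p | ∀ j, j < μ2 → lb (p.1 j) (p.2 j)} =
      enc2 h21 '' SuperT (lamF μ1 μ2) b a := by
  apply Set.Subset.antisymm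
  · rintro p ⟨⟨h1, h2, h3, h4, h5, h6⟩, hcomp⟩
    set T : Filling (lamF μ1 μ2) :=
      fun i j => if (j : ℕ) = 0 then p.1 ↑i else p.2 ↑i with hT
    have henc : enc2 h21 T = p := by
      refine Prod.ext ?_ ?_ <;> funext x <;> simp only [enc2]
      · by_cases h : x < μ1
        · rw [dif_pos h]
          show (if (0:ℕ) = 0 then p.1 x else p.2 x) = p.1 x
          rw [if_pos rfl]
        · rw [dif_neg h]; exact (h3 x (by omega)).symm
      · by_cases h : x < μ2
        · rw [dif_pos h]
          show (if (1:ℕ) = 0 then p.1 x else p.2 x) = p.2 x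
          rw [if_neg (by omega)]
        · rw [dif_neg h]; exact (h4 x (by omega)).symm
    obtain ⟨hA, hB⟩ := (superT_iff h21 T).mpr (by rw [henc]; exact ⟨h1, h2, hcomp⟩)
    refine ⟨T, ⟨hA, hB, ?_, ?_⟩, henc⟩
    · rw [show blCount T = gsum blg μ1 μ2 (enc2 h21 T) from gsum_enc2 h21 blg T, henc]
      exact h5
    · rw [show wtCount T = gsum wtg μ1 μ2 (enc2 h21 T) from gsum_enc2 h21 wtg T, henc]
      exact h6
  · rintro _ ⟨T, ⟨hrb, hcs, hbl, hwt⟩, rfl⟩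
    obtain ⟨hq1, hq2, hcomp⟩ := (superT_iff h21 T).mp ⟨hrb, hcs⟩
    refine ⟨⟨hq1, hq2, ?_, ?_, ?_, ?_⟩, hcomp⟩
    · intro i hi; simp only [enc2]; rw [dif_neg (by omega)]
    · intro i hi; simp only [enc2]; rw [dif_neg (by omega)]
    · rw [← show blCount T = gsum blg μ1 μ2 (enc2 h21 T) from gsum_enc2 h21 blg T]
      exact hbl
    · rw [← show wtCount T = gsum wtg μ1 μ2 (enc2 h21 T) from gsum_enc2 h21 wtg T]
      exact hwt

end Enc2


/-- For a two-part partition `μ = (μ₁, μ₂)` with `μ₁ ≥ 2`,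
`|Ξ((μ₁,μ₂), b, a)| - |Ξ((μ₂-1, μ₁+1), b, a)| = |ST(μᵗ, b, a)|`. -/
theorem two_column_involution (μ1 μ2 b a : ℕ) (h21 : μ2 ≤ μ1) (h2 : 1 ≤ μ2)
    (h1 : 2 ≤ μ1) :
    ((Xi ![μ1, μ2] b a).ncard : ℤ) - ((Xi ![μ2 - 1, μ1 + 1] b a).ncard : ℤ) =
      ((SuperT (fun j : Fin μ1 => if (j : ℕ) < μ2 then 2 else 1) b a).ncard : ℤ) := by
  have key := EE_ncard_eq h21 h2 (EE_finite μ1 μ2 b a)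
  have e1 : (Xi ![μ1, μ2] b a).ncard = (EE μ1 μ2 b a).ncard := Xi_ncard_EE
  have e2 : (Xi ![μ2 - 1, μ1 + 1] b a).ncard = (EE (μ2 - 1) (μ1 + 1) b a).ncard :=
    Xi_ncard_EE
  have e3 : (EE μ1 μ2 b a ∩ {p | ∀ j, j < μ2 → lb (p.1 j) (p.2 j)}).ncard
      = (SuperT (lamF μ1 μ2) b a).ncard := by
    rw [compat_eq_image h21, Set.ncard_image_of_injOn ((enc2_inj h21).injOn)]
  show ((Xi ![μ1, μ2] b a).ncard : ℤ) - ((Xi ![μ2 - 1, μ1 + 1] b a).ncard : ℤ) =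
    ((SuperT (lamF μ1 μ2) b a).ncard : ℤ)
  omega
end

section
/- Let μ be a partition of n with μ ≠ (n), and let ST(μ, b, a) denote the set of supertableaux of shape μ with b blue entries and total numerical value a (fillings from A = {red 0 < blue 0 < red 1 < blue 1 < …} that are row-standard in blue entries and column-standard in red entries). Then the alternating sum Σ_{j=0}^{b} (-1)^j |ST(μ, b-j, a+1+j)| equals the number of tableaux in ST(μ, b, a+1) whose entry in the last cell of the first column is red. -/
section Aux

variable {k : ℕ} {lam : Fin k → ℕ}

lemma rank_eq_iff (x y : Letter) (h : rank x = rank y) : x = y := by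
  obtain ⟨a, b⟩ := x; obtain ⟨c, d⟩ := y
  simp only [rank] at h
  cases b <;> cases d <;> simp_all <;> omega

lemma rank_red (m : ℕ) : rank (m, false) = 2 * m := by simp [rank]

lemma rank_blue (m : ℕ) : rank (m, true) = 2 * m + 1 := by simp [rank]

lemma rank_lt_of_le_ne {x y : Letter} (h : rank x ≤ rank y) (hne : x ≠ y) :
    rank x < rank y :=
  lt_of_le_of_ne h (fun he => hne (rank_eq_iff _ _ he))

lemma letter_eta (x : Letter) (v : ℕ) (c : Bool) (h1 : x.1 = v) (h2 : x.2 = c) :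
    x = (v, c) := by
  obtain ⟨p, q⟩ := x
  cases h1; cases h2; rfl

def flipC (T : Filling lam) (i : Fin k) (x : Letter) : Filling lam :=
  fun i' j => if i' = i ∧ (j : ℕ) = 0 then x else T i' j

lemma flipC_apply_ne (T : Filling lam) (i : Fin k) (x : Letter) (i' : Fin k)
    (j : Fin (lam i')) (hc : ¬(i' = i ∧ (j : ℕ) = 0)) : flipC T i x i' j = T i' j :=
  if_neg hc

lemma flipC_apply_self (T : Filling lam) (i : Fin k) (x : Letter) (j : Fin (lam i))
    (hj : (j : ℕ) = 0) : flipC T i x i j = x :=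
  if_pos ⟨rfl, hj⟩

lemma flipC_flipC (T : Filling lam) (i : Fin k) (x y : Letter) :
    flipC (flipC T i x) i y = flipC T i y := by
  funext i' j
  by_cases hc : i' = i ∧ (j : ℕ) = 0
  · obtain ⟨h1, h2⟩ := hc; subst h1
    rw [flipC_apply_self _ _ _ _ h2, flipC_apply_self _ _ _ _ h2]
  · rw [flipC_apply_ne _ _ _ _ _ hc, flipC_apply_ne _ _ _ _ _ hc,
      flipC_apply_ne _ _ _ _ _ hc]

lemma flipC_self (T : Filling lam) (i : Fin k) (h : 0 < lam i) (x : Letter)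
    (hx : T i ⟨0, h⟩ = x) : flipC T i x = T := by
  funext i' j
  by_cases hc : i' = i ∧ (j : ℕ) = 0
  · obtain ⟨h1, h2⟩ := hc; subst h1
    rw [flipC_apply_self _ _ _ _ h2, ← hx]
    congr 1
    exact Fin.ext h2.symm
  · exact flipC_apply_ne _ _ _ _ _ hc

lemma sum_flipC (T : Filling lam) (i : Fin k) (h : 0 < lam i) (x : Letter)
    (F : Letter → ℕ) :
    (∑ i', ∑ j, F (flipC T i x i' j)) + F (T i ⟨0, h⟩)
      = (∑ i', ∑ j, F (T i' j)) + F x := by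
  classical
  rw [← Finset.sum_erase_add _ _ (Finset.mem_univ i),
      ← Finset.sum_erase_add _ (fun i' => ∑ j, F (T i' j)) (Finset.mem_univ i)]
  have houter : ∀ i' ∈ Finset.univ.erase i,
      (∑ j, F (flipC T i x i' j)) = ∑ j, F (T i' j) := by
    intro i' hi'
    refine Finset.sum_congr rfl (fun j _ => ?_)
    rw [flipC_apply_ne _ _ _ _ _ (fun hc => (Finset.mem_erase.mp hi').1 hc.1)]
  rw [Finset.sum_congr rfl houter]
  have hinner : (∑ j, F (flipC T i x i j)) + F (T i ⟨0, h⟩)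
      = (∑ j, F (T i j)) + F x := by
    rw [← Finset.sum_erase_add _ _ (Finset.mem_univ (⟨0, h⟩ : Fin (lam i))),
        ← Finset.sum_erase_add _ (fun j => F (T i j))
          (Finset.mem_univ (⟨0, h⟩ : Fin (lam i)))]
    have hin : ∀ j ∈ Finset.univ.erase (⟨0, h⟩ : Fin (lam i)),
        F (flipC T i x i j) = F (T i j) := by
      intro j hj
      rw [flipC_apply_ne _ _ _ _ _ (fun hc => (Finset.mem_erase.mp hj).1 (Fin.ext hc.2))]
    rw [Finset.sum_congr rfl hin, flipC_apply_self _ _ _ _ rfl]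
    omega
  omega

lemma blCount_flipC (T : Filling lam) (i : Fin k) (h : 0 < lam i) (x : Letter) :
    blCount (flipC T i x) + (if (T i ⟨0, h⟩).2 then 1 else 0)
      = blCount T + (if x.2 then 1 else 0) :=
  sum_flipC T i h x (fun z => if z.2 then 1 else 0)

lemma wtCount_flipC (T : Filling lam) (i : Fin k) (h : 0 < lam i) (x : Letter) :
    wtCount (flipC T i x) + (T i ⟨0, h⟩).1 = wtCount T + x.1 :=
  sum_flipC T i h x (fun z => z.1)

lemma wt_le (T : Filling lam) (i : Fin k) (j : Fin (lam i)) : (T i j).1 ≤ wtCount T := by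
  unfold wtCount
  calc (T i j).1 ≤ ∑ j', (T i j').1 :=
        Finset.single_le_sum (f := fun j' => (T i j').1)
          (fun _ _ => Nat.zero_le _) (Finset.mem_univ j)
    _ ≤ ∑ i', ∑ j', (T i' j').1 :=
        Finset.single_le_sum (f := fun i' => ∑ j', (T i' j').1)
          (fun _ _ => Nat.zero_le _) (Finset.mem_univ i)

lemma one_le_blCount (T : Filling lam) (i : Fin k) (j : Fin (lam i))
    (hb : (T i j).2 = true) : 1 ≤ blCount T := by
  unfold blCount
  calc 1 = (if (T i j).2 then 1 else 0) := by simp [hb]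
    _ ≤ ∑ j', (if (T i j').2 then 1 else 0) :=
        Finset.single_le_sum (f := fun j' => if (T i j').2 then (1 : ℕ) else 0)
          (fun _ _ => Nat.zero_le _) (Finset.mem_univ j)
    _ ≤ ∑ i', ∑ j', (if (T i' j').2 then 1 else 0) :=
        Finset.single_le_sum (f := fun i' => ∑ j', (if (T i' j').2 then (1 : ℕ) else 0))
          (fun _ _ => Nat.zero_le _) (Finset.mem_univ i)

lemma superT_finite (lam : Fin k → ℕ) (b a : ℕ) : (SuperT lam b a).Finite := by
  apply Set.Finite.subset (Set.Finite.pi (fun i : Fin k =>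
    Set.Finite.pi (fun j : Fin (lam i) =>
      Set.Finite.prod (Set.finite_Iic a) Set.finite_univ)))
  intro T hT
  simp only [Set.mem_pi, Set.mem_univ, forall_true_left, Set.mem_prod, Set.mem_Iic]
  intro i j
  refine ⟨?_, trivial⟩
  have h1 : (T i j).1 ≤ wtCount T := wt_le T i j
  rw [hT.2.2.2] at h1
  exact h1

/-- Tableaux in `SuperT` whose last-first-column entry is red. -/
def Rset (lam : Fin k → ℕ) (b a : ℕ) (i : Fin k) (h : 0 < lam i) : Set (Filling lam) :=
  {T ∈ SuperT lam b a | (T i ⟨0, h⟩).2 = false}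

/-- Tableaux in `SuperT` whose last-first-column entry is blue. -/
def Bset (lam : Fin k → ℕ) (b a : ℕ) (i : Fin k) (h : 0 < lam i) : Set (Filling lam) :=
  {T ∈ SuperT lam b a | (T i ⟨0, h⟩).2 = true}

lemma flipC_rowstd_btr (T : Filling lam) (i : Fin k) (h : 0 < lam i) (m : ℕ)
    (hrow : RowStandardBlue T) (he : T i ⟨0, h⟩ = (m, true)) :
    RowStandardBlue (flipC T i (m + 1, false)) := by
  intro i' j j' hjj'
  have hjv : (j : ℕ) < (j' : ℕ) := hjj'
  have hj' : ¬(i' = i ∧ ((j' : ℕ) = 0)) := fun hc => by omega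
  have e2 : flipC T i (m + 1, false) i' j' = T i' j' := flipC_apply_ne _ _ _ _ _ hj'
  by_cases hc : i' = i ∧ (j : ℕ) = 0
  · obtain ⟨hi, hj⟩ := hc
    subst hi
    have hjeq : j = ⟨0, h⟩ := Fin.ext hj
    subst hjeq
    have e1 : flipC T i' (m + 1, false) i' ⟨0, h⟩ = (m + 1, false) :=
      flipC_apply_self _ _ _ _ rfl
    rw [e1, e2]
    have h1 := hrow i' ⟨0, h⟩ j' hjj'
    rw [he] at h1
    have hne : ((m : ℕ), true) ≠ T i' j' := by
      intro heq
      have := h1.2 heq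
      simp at this
    have hlt := rank_lt_of_le_ne h1.1 hne
    rw [rank_blue] at hlt
    constructor
    · rw [rank_red]; omega
    · intro _; rfl
  · rw [flipC_apply_ne _ _ _ _ _ hc, e2]
    exact hrow i' j j' hjj'

lemma flipC_colstd_btr (T : Filling lam) (i : Fin k) (hmax : ∀ i', i' ≤ i)
    (h : 0 < lam i) (m : ℕ) (hcol : ColStandardRed T) (he : T i ⟨0, h⟩ = (m, true)) :
    ColStandardRed (flipC T i (m + 1, false)) := by
  intro i1 i2 h12 j hj1 hj2
  have hi1 : i1 ≠ i := ne_of_lt (lt_of_lt_of_le h12 (hmax i2))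
  have e1 : flipC T i (m + 1, false) i1 ⟨j, hj1⟩ = T i1 ⟨j, hj1⟩ :=
    flipC_apply_ne _ _ _ _ _ (fun hc => hi1 hc.1)
  by_cases hc : i2 = i ∧ j = 0
  · obtain ⟨hi2, hj⟩ := hc
    subst hi2
    subst hj
    have e2 : flipC T i2 (m + 1, false) i2 ⟨0, hj2⟩ = (m + 1, false) :=
      flipC_apply_self _ _ _ _ rfl
    rw [e1, e2]
    have he' : T i2 ⟨0, hj2⟩ = (m, true) := he
    have h1 := hcol i1 i2 h12 0 hj1 hj2
    rw [he'] at h1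
    have hle := h1.1
    rw [rank_blue] at hle
    constructor
    · rw [rank_red]; omega
    · intro heq
      exfalso
      have : rank (T i1 ⟨0, hj1⟩) = 2 * (m + 1) := by rw [heq, rank_red]
      omega
  · have e2 : flipC T i (m + 1, false) i2 ⟨j, hj2⟩ = T i2 ⟨j, hj2⟩ :=
      flipC_apply_ne _ _ _ _ _ hc
    rw [e1, e2]
    exact hcol i1 i2 h12 j hj1 hj2

lemma flipC_rowstd_rtb (T : Filling lam) (i : Fin k) (h : 0 < lam i) (m : ℕ)
    (hrow : RowStandardBlue T) (he : T i ⟨0, h⟩ = (m + 1, false)) :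
    RowStandardBlue (flipC T i (m, true)) := by
  intro i' j j' hjj'
  have hjv : (j : ℕ) < (j' : ℕ) := hjj'
  have hj' : ¬(i' = i ∧ ((j' : ℕ) = 0)) := fun hc => by omega
  have e2 : flipC T i (m, true) i' j' = T i' j' := flipC_apply_ne _ _ _ _ _ hj'
  by_cases hc : i' = i ∧ (j : ℕ) = 0
  · obtain ⟨hi, hj⟩ := hc
    subst hi
    have hjeq : j = ⟨0, h⟩ := Fin.ext hj
    subst hjeq
    have e1 : flipC T i' (m, true) i' ⟨0, h⟩ = (m, true) := flipC_apply_self _ _ _ _ rfl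
    rw [e1, e2]
    have h1 := hrow i' ⟨0, h⟩ j' hjj'
    rw [he] at h1
    have hge := h1.1
    rw [rank_red] at hge
    constructor
    · rw [rank_blue]; omega
    · intro heq
      exfalso
      have : rank (T i' j') = 2 * m + 1 := by rw [← heq, rank_blue]
      omega
  · rw [flipC_apply_ne _ _ _ _ _ hc, e2]
    exact hrow i' j j' hjj'

lemma flipC_colstd_rtb (T : Filling lam) (i : Fin k) (hmax : ∀ i', i' ≤ i)
    (h : 0 < lam i) (m : ℕ) (hcol : ColStandardRed T) (he : T i ⟨0, h⟩ = (m + 1, false)) :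
    ColStandardRed (flipC T i (m, true)) := by
  intro i1 i2 h12 j hj1 hj2
  have hi1 : i1 ≠ i := ne_of_lt (lt_of_lt_of_le h12 (hmax i2))
  have e1 : flipC T i (m, true) i1 ⟨j, hj1⟩ = T i1 ⟨j, hj1⟩ :=
    flipC_apply_ne _ _ _ _ _ (fun hc => hi1 hc.1)
  by_cases hc : i2 = i ∧ j = 0
  · obtain ⟨hi2, hj⟩ := hc
    subst hi2
    subst hj
    have e2 : flipC T i2 (m, true) i2 ⟨0, hj2⟩ = (m, true) := flipC_apply_self _ _ _ _ rfl
    rw [e1, e2]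
    have he' : T i2 ⟨0, hj2⟩ = (m + 1, false) := he
    have h1 := hcol i1 i2 h12 0 hj1 hj2
    rw [he'] at h1
    have hne : T i1 ⟨0, hj1⟩ ≠ ((m : ℕ) + 1, false) := by
      intro heq
      have := h1.2 heq
      rw [heq] at this
      simp at this
    have hlt := rank_lt_of_le_ne h1.1 hne
    rw [rank_red] at hlt
    constructor
    · rw [rank_blue]; omega
    · intro heq
      rw [heq]
  · have e2 : flipC T i (m, true) i2 ⟨j, hj2⟩ = T i2 ⟨j, hj2⟩ :=
      flipC_apply_ne _ _ _ _ _ hc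
    rw [e1, e2]
    exact hcol i1 i2 h12 j hj1 hj2

lemma red_pos (T : Filling lam) (hcol : ColStandardRed T) (i1 i : Fin k)
    (hlt : i1 < i) (h1 : 0 < lam i1) (h : 0 < lam i)
    (hred : (T i ⟨0, h⟩).2 = false) : 0 < (T i ⟨0, h⟩).1 := by
  by_contra hz
  have hz' : (T i ⟨0, h⟩).1 = 0 := by omega
  have he : T i ⟨0, h⟩ = (0, false) := letter_eta _ _ _ hz' hred
  have hc := hcol i1 i hlt 0 h1 h
  rw [he] at hc
  have h2 := hc.1
  rw [rank_red] at h2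
  have he1 : T i1 ⟨0, h1⟩ = (0, false) := by
    apply rank_eq_iff
    rw [rank_red]
    omega
  have h3 := hc.2 he1
  rw [he1] at h3
  simp at h3

lemma bij_ncard (lam : Fin k → ℕ) (i : Fin k) (hmax : ∀ i', i' ≤ i) (h : 0 < lam i)
    (i1 : Fin k) (hi1 : i1 < i) (h1 : 0 < lam i1) (b a : ℕ) :
    (Bset lam (b + 1) a i h).ncard = (Rset lam b (a + 1) i h).ncard := by
  classical
  have hmapsB : ∀ T ∈ Bset lam (b + 1) a i h,
      flipC T i ((T i ⟨0, h⟩).1 + 1, false) ∈ Rset lam b (a + 1) i h := by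
    rintro T ⟨⟨hrow, hcol, hbl, hwt⟩, hblue⟩
    have he : T i ⟨0, h⟩ = ((T i ⟨0, h⟩).1, true) := letter_eta _ _ _ rfl hblue
    have hBL := blCount_flipC T i h ((T i ⟨0, h⟩).1 + 1, false)
    have hWT := wtCount_flipC T i h ((T i ⟨0, h⟩).1 + 1, false)
    rw [hblue] at hBL
    simp at hBL hWT
    refine ⟨⟨flipC_rowstd_btr T i h _ hrow he, flipC_colstd_btr T i hmax h _ hcol he,
      ?_, ?_⟩, ?_⟩
    · omega
    · omega
    · rw [flipC_apply_self _ _ _ _ rfl]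
  have hmapsR : ∀ T ∈ Rset lam b (a + 1) i h,
      flipC T i ((T i ⟨0, h⟩).1 - 1, true) ∈ Bset lam (b + 1) a i h := by
    rintro T ⟨⟨hrow, hcol, hbl, hwt⟩, hred⟩
    have hpos' : 0 < (T i ⟨0, h⟩).1 := red_pos T hcol i1 i hi1 h1 h hred
    obtain ⟨m, hm⟩ : ∃ m, (T i ⟨0, h⟩).1 = m + 1 := ⟨(T i ⟨0, h⟩).1 - 1, by omega⟩
    have he : T i ⟨0, h⟩ = (m + 1, false) := letter_eta _ _ _ hm hred
    have hml : (T i ⟨0, h⟩).1 - 1 = m := by omega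
    rw [hml]
    have hBL := blCount_flipC T i h (m, true)
    have hWT := wtCount_flipC T i h (m, true)
    rw [hred] at hBL
    simp at hBL hWT
    refine ⟨⟨flipC_rowstd_rtb T i h m hrow he, flipC_colstd_rtb T i hmax h m hcol he,
      ?_, ?_⟩, ?_⟩
    · omega
    · omega
    · rw [flipC_apply_self _ _ _ _ rfl]
  have hgf : ∀ T ∈ Bset lam (b + 1) a i h,
      flipC (flipC T i ((T i ⟨0, h⟩).1 + 1, false)) i
        (((flipC T i ((T i ⟨0, h⟩).1 + 1, false)) i ⟨0, h⟩).1 - 1, true) = T := by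
    rintro T ⟨_, hblue⟩
    have h2 : ((flipC T i ((T i ⟨0, h⟩).1 + 1, false)) i ⟨0, h⟩).1
        = (T i ⟨0, h⟩).1 + 1 := by
      rw [flipC_apply_self _ _ _ _ rfl]
    rw [h2, Nat.add_sub_cancel, flipC_flipC]
    exact flipC_self T i h _ (letter_eta _ _ _ rfl hblue)
  have hfg : ∀ T ∈ Rset lam b (a + 1) i h,
      flipC (flipC T i ((T i ⟨0, h⟩).1 - 1, true)) i
        (((flipC T i ((T i ⟨0, h⟩).1 - 1, true)) i ⟨0, h⟩).1 + 1, false) = T := by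
    rintro T ⟨⟨hrow, hcol, hbl, hwt⟩, hred⟩
    have hpos' : 0 < (T i ⟨0, h⟩).1 := red_pos T hcol i1 i hi1 h1 h hred
    obtain ⟨m, hm⟩ : ∃ m, (T i ⟨0, h⟩).1 = m + 1 := ⟨(T i ⟨0, h⟩).1 - 1, by omega⟩
    have h2 : ((flipC T i ((T i ⟨0, h⟩).1 - 1, true)) i ⟨0, h⟩).1
        = (T i ⟨0, h⟩).1 - 1 := by
      rw [flipC_apply_self _ _ _ _ rfl]
    rw [h2, flipC_flipC, hm]
    simp only [Nat.add_sub_cancel]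
    exact flipC_self T i h _ (letter_eta _ _ _ hm hred)
  have hbij : Set.BijOn (fun T => flipC T i ((T i ⟨0, h⟩).1 + 1, false))
      (Bset lam (b + 1) a i h) (Rset lam b (a + 1) i h) := by
    refine ⟨fun T hT => hmapsB T hT, ?_, ?_⟩
    · intro T1 hT1 T2 hT2 heq
      simp only [] at heq
      have e1 := hgf T1 hT1
      have e2 := hgf T2 hT2
      rw [heq] at e1
      exact e1.symm.trans e2
    · intro T hT
      refine ⟨flipC T i ((T i ⟨0, h⟩).1 - 1, true), hmapsR T hT, ?_⟩
      have h3 := hfg T hT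
      simp only []
      exact h3
  rw [← hbij.image_eq]
  exact (Set.ncard_image_of_injOn hbij.injOn).symm

lemma partition_ncard (lam : Fin k → ℕ) (i : Fin k) (h : 0 < lam i) (b a : ℕ) :
    (SuperT lam b a).ncard = (Rset lam b a i h).ncard + (Bset lam b a i h).ncard := by
  have hfin := superT_finite lam b a
  have hun : SuperT lam b a = Rset lam b a i h ∪ Bset lam b a i h := by
    ext T
    constructor
    · intro hT
      rcases Bool.eq_false_or_eq_true ((T i ⟨0, h⟩).2) with hb | hb
      · exact Or.inr ⟨hT, hb⟩
      · exact Or.inl ⟨hT, hb⟩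
    · rintro (⟨hT, _⟩ | ⟨hT, _⟩) <;> exact hT
  have hsubR : Rset lam b a i h ⊆ SuperT lam b a := fun T hT => hT.1
  have hsubB : Bset lam b a i h ⊆ SuperT lam b a := fun T hT => hT.1
  have hdisj : Disjoint (Rset lam b a i h) (Bset lam b a i h) := by
    rw [Set.disjoint_left]
    rintro T ⟨_, hr⟩ ⟨_, hb⟩
    rw [hr] at hb
    exact Bool.false_ne_true hb
  rw [hun]
  exact Set.ncard_union_eq hdisj (hfin.subset hsubR) (hfin.subset hsubB)

lemma bset_zero (lam : Fin k → ℕ) (i : Fin k) (h : 0 < lam i) (a : ℕ) :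
    Bset lam 0 a i h = ∅ := by
  rw [Set.eq_empty_iff_forall_notMem]
  rintro T ⟨⟨_, _, hbl, _⟩, hblue⟩
  have := one_le_blCount T i ⟨0, h⟩ hblue
  omega

lemma main_sum (lam : Fin k → ℕ) (i : Fin k) (hmax : ∀ i', i' ≤ i) (h : 0 < lam i)
    (i1 : Fin k) (hi1 : i1 < i) (h1 : 0 < lam i1) (b a : ℕ) :
    (∑ j ∈ Finset.range (b + 1),
        (-1 : ℤ) ^ j * ((SuperT lam (b - j) (a + 1 + j)).ncard : ℤ)) =
      ((Rset lam b (a + 1) i h).ncard : ℤ) := by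
  induction b generalizing a with
  | zero =>
    simp only [zero_add, Finset.sum_range_one, pow_zero, one_mul, Nat.sub_zero, add_zero]
    rw [partition_ncard lam i h 0 (a + 1), bset_zero lam i h (a + 1),
      Set.ncard_empty, Nat.add_zero]
  | succ b ih =>
    rw [Finset.sum_range_succ'
      (fun j => (-1 : ℤ) ^ j * ((SuperT lam (b + 1 - j) (a + 1 + j)).ncard : ℤ)) (b + 1)]
    have hre : ∀ j ∈ Finset.range (b + 1),
        (-1 : ℤ) ^ (j + 1) * ((SuperT lam (b + 1 - (j + 1)) (a + 1 + (j + 1))).ncard : ℤ)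
          = -((-1 : ℤ) ^ j * ((SuperT lam (b - j) ((a + 1) + 1 + j)).ncard : ℤ)) := by
      intro j _
      have e1 : b + 1 - (j + 1) = b - j := by omega
      have e2 : a + 1 + (j + 1) = (a + 1) + 1 + j := by omega
      rw [e1, e2, pow_succ]
      ring
    rw [Finset.sum_congr rfl hre, Finset.sum_neg_distrib, ih (a + 1)]
    simp only [pow_zero, one_mul, Nat.sub_zero, add_zero]
    rw [partition_ncard lam i h (b + 1) (a + 1),
      bij_ncard lam i hmax h i1 hi1 h1 b (a + 1)]
    push_cast
    ring

end Aux

/-- For a partition `μ` of `n` with `μ ≠ (n)` (i.e. at least two parts),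
`Σ_{j=0}^{b} (-1)^j |SuperT(μ, b-j, a+1+j)|` equals the number of supertableaux in
`SuperT(μ, b, a+1)` whose entry in the last cell of the first column is red. -/
theorem outer_involution_sum (d : ℕ) (hd : 2 ≤ d) (μ : Fin d → ℕ)
    (hanti : ∀ i j : Fin d, i ≤ j → μ j ≤ μ i) (hpos : ∀ i, 1 ≤ μ i) (b a : ℕ) :
    (∑ j ∈ Finset.range (b + 1),
        (-1 : ℤ) ^ j * ((SuperT μ (b - j) (a + 1 + j)).ncard : ℤ)) =
      (({T ∈ SuperT μ b (a + 1) |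
          (T ⟨d - 1, by omega⟩ ⟨0, hpos ⟨d - 1, by omega⟩⟩).2 = false}).ncard : ℤ) := by
  have hlt : d - 1 < d := by omega
  have h0 : (0 : ℕ) < d := by omega
  have hmax : ∀ i' : Fin d, i' ≤ (⟨d - 1, hlt⟩ : Fin d) := by
    rintro ⟨v, hv⟩
    simp only [Fin.mk_le_mk]
    omega
  have hi1 : (⟨0, h0⟩ : Fin d) < (⟨d - 1, hlt⟩ : Fin d) := by
    simp only [Fin.mk_lt_mk]; omega
  exact main_sum μ ⟨d - 1, hlt⟩ hmax (hpos _) ⟨0, h0⟩ hi1 (hpos _) b a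
end
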